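/- Let n ≥ 3, let S = {0,1}^n (the set of functions from Fin n to {0,1}), let Δ be the collection of all subsets of S of even cardinality, and for each i let A_i = {x ∈ S : x(i) = 1}. Then the family {A_1, …, A_n} is not compatible in Δ: there is no Boolean subalgebra of Δ containing all of A_1, …, A_n. Indeed, the intersection ⋂_{i ≤ n} A_i is a singleton and hence does not belong to Δ. -/
import Mathlib


open scoped symmDiff

/-- An enriched quantum logic (EQL) on a (nonempty) set `S` (here: the type `α`):
a collection `Δ` of subsets containing the whole set and closed under symmetric
difference. -/
def IsEQL {α : Type*} (Δ : Set (Set α)) : Prop :=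
  Set.univ ∈ Δ ∧ ∀ A ∈ Δ, ∀ B ∈ Δ, A ∆ B ∈ Δ

/-- `B` is a Boolean subalgebra of the collection `Δ`: a subcollection of `Δ`
containing the whole set and closed under complements, binary unions and
binary intersections. -/
def IsBoolSub {α : Type*} (Δ B : Set (Set α)) : Prop :=
  B ⊆ Δ ∧ Set.univ ∈ B ∧ (∀ A ∈ B, Aᶜ ∈ B) ∧
    (∀ A ∈ B, ∀ C ∈ B, A ∪ C ∈ B) ∧ (∀ A ∈ B, ∀ C ∈ B, A ∩ C ∈ B)

/-- A family `M ⊆ Δ` is compatible in `Δ` if it is contained in some Boolean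
subalgebra of `Δ`. -/
def IsCompatible {α : Type*} (Δ M : Set (Set α)) : Prop :=
  ∃ B, IsBoolSub Δ B ∧ M ⊆ B

/-- For `S = {0,1}ⁿ` (`n ≥ 3`), `Δ` the even-cardinality subsets of `S`, and
`A i = {x | x i = 1}`: the intersection of the `A i` is a singleton, it does
not belong to `Δ`, and the whole family `{A 1, …, A n}` is not compatible
in `Δ`. -/
theorem stmt3 (n : ℕ) (hn : 3 ≤ n)
    (Δ : Set (Set (Fin n → Bool))) (hΔ : Δ = {X : Set (Fin n → Bool) | Even X.ncard})
    (A : Fin n → Set (Fin n → Bool)) (hA : ∀ i, A i = {x : Fin n → Bool | x i = true}) :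
    (∃ p : Fin n → Bool, (⋂ i, A i) = {p}) ∧ (⋂ i, A i) ∉ Δ ∧
      ¬ IsCompatible Δ (Set.range A) := by
  have hsing : (⋂ i, A i) = {fun _ => true} := by
    ext x
    simp only [Set.mem_iInter, hA, Set.mem_setOf_eq, Set.mem_singleton_iff]
    constructor
    · intro h; funext i; exact h i
    · intro h i; rw [h]
  have hnot : (⋂ i, A i) ∉ Δ := by
    rw [hsing, hΔ]
    simp [Set.ncard_singleton]
  refine ⟨⟨_, hsing⟩, hnot, ?_⟩
  rintro ⟨B, ⟨hBΔ, _, _, _, hinter⟩, hMB⟩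
  have key : ∀ s : Finset (Fin n), s.Nonempty → (⋂ i ∈ s, A i) ∈ B := by
    intro s hs
    induction s using Finset.induction with
    | empty => exact absurd hs (by simp)
    | @insert a s ha ih =>
      rcases s.eq_empty_or_nonempty with rfl | hsne
      · simpa using hMB ⟨a, rfl⟩
      · have h1 : A a ∈ B := hMB ⟨a, rfl⟩
        have h2 := ih hsne
        have : (⋂ i ∈ insert a s, A i) = A a ∩ ⋂ i ∈ s, A i := by
          simp
        rw [this]
        exact hinter _ h1 _ h2
  have huniv : (⋂ i, A i) ∈ B := by
    have := key Finset.univ ⟨⟨0, by omega⟩, Finset.mem_univ _⟩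
    simpa using this
  exact hnot (hBΔ huniv)
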